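/- arXiv:2012.10740 — 2 statements merged into one kernel-verified Lean document; each statement's English description precedes it below -/
import Mathlib

section
/- For each n with 2 ≤ n ≤ N, the DOC kernels satisfy the exact identity θ_0^{(n)} − θ_1^{(n)} = q_1^{(n)} / ( q_0^{(n)} q_0^{(n−1)} ) = ( ω_{1+α}(τ_n + τ_{n−1}) − ω_{1+α}(τ_n) ) / ( ω_{1+α}(τ_n) · ω_{1+α}(τ_{n−1}) ). -/
open Finset intervalIntegral Matrix

noncomputable def omegaK (μ s : ℝ) : ℝ := s ^ (μ - 1) / Real.Gamma μ

noncomputable def qK (α : ℝ) (t : ℕ → ℝ) (n k : ℕ) : ℝ :=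
  ∫ s in (t (k - 1))..(t k), omegaK α (t n - s)

noncomputable def aK (α : ℝ) (t : ℕ → ℝ) (n k : ℕ) : ℝ :=
  if k = n then qK α t n n else qK α t n k - qK α t (n - 1) k

noncomputable def thetaAux (A : ℕ → ℕ → ℝ) (n : ℕ) : ℕ → ℕ → ℝ
  | 0, m => if m = 0 then 1 / A n n else 0
  | M + 1, m =>
      if m ≤ M then thetaAux A n M m
      else -(1 / A (n - (M + 1)) (n - (M + 1))) *
        ∑ ℓ ∈ Finset.range (M + 1), thetaAux A n M ℓ * A (n - ℓ) (n - (M + 1))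

noncomputable def thetaK (α : ℝ) (t : ℕ → ℝ) (n k : ℕ) : ℝ :=
  thetaAux (aK α t) n (n - k) (n - k)

noncomputable def Hfun (a b : ℝ) : ℝ := a ^ 3 / 3 + a * b ^ 2 / 2 + b ^ 3 / 6 - (a + b) / 2

noncomputable def Ffun (u : ℝ) : ℝ := (1 - u ^ 2) ^ 2 / 4

noncomputable def zetaK (α : ℝ) (t : ℕ → ℝ) (n j : ℕ) : ℝ :=
  if j = n then thetaK α t n n else thetaK α t n j - thetaK α t n (j + 1)

lemma qK_formula (α : ℝ) (hα0 : 0 < α) (t : ℕ → ℝ) (n k : ℕ) :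
    qK α t n k = ((t n - t (k - 1)) ^ α - (t n - t k) ^ α) / (α * Real.Gamma α) := by
  unfold qK omegaK
  rw [intervalIntegral.integral_div,
    intervalIntegral.integral_comp_sub_left (fun s => s ^ (α - 1)) (t n),
    integral_rpow (Or.inl (by linarith)), sub_add_cancel, div_div]

theorem stmt7 (α : ℝ) (hα0 : 0 < α) (hα1 : α < 1)
    (N : ℕ) (t : ℕ → ℝ) (ht0 : t 0 = 0) (ht : ∀ k, k < N → t k < t (k + 1)) :
    ∀ n, 2 ≤ n → n ≤ N →
      thetaK α t n n - thetaK α t n (n - 1)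
          = qK α t n (n - 1) / (qK α t n n * qK α t (n - 1) (n - 1)) ∧
      thetaK α t n n - thetaK α t n (n - 1)
          = (omegaK (1 + α) ((t n - t (n - 1)) + (t (n - 1) - t (n - 2)))
              - omegaK (1 + α) (t n - t (n - 1)))
            / (omegaK (1 + α) (t n - t (n - 1)) * omegaK (1 + α) (t (n - 1) - t (n - 2))) := by
  intro n hn2 hnN
  have hΓ : 0 < Real.Gamma α := Real.Gamma_pos_of_pos hα0
  have hc : (0:ℝ) < α * Real.Gamma α := mul_pos hα0 hΓ
  -- step sizes
  have hτn : t (n - 1) < t n := by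
    have := ht (n - 1) (by omega)
    rwa [show n - 1 + 1 = n by omega] at this
  have hτm : t (n - 2) < t (n - 1) := by
    have := ht (n - 2) (by omega)
    rwa [show n - 2 + 1 = n - 1 by omega] at this
  -- q values
  have hx : qK α t n n = (t n - t (n - 1)) ^ α / (α * Real.Gamma α) := by
    rw [qK_formula α hα0, sub_self, Real.zero_rpow hα0.ne', sub_zero]
  have hy : qK α t (n - 1) (n - 1) = (t (n - 1) - t (n - 2)) ^ α / (α * Real.Gamma α) := by
    rw [qK_formula α hα0, sub_self, Real.zero_rpow hα0.ne', sub_zero,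
      show n - 1 - 1 = n - 2 by omega]
  have hz : qK α t n (n - 1) =
      ((t n - t (n - 2)) ^ α - (t n - t (n - 1)) ^ α) / (α * Real.Gamma α) := by
    rw [qK_formula α hα0, show n - 1 - 1 = n - 2 by omega]
  have hxpos : 0 < qK α t n n := by
    rw [hx]; exact div_pos (Real.rpow_pos_of_pos (by linarith) α) hc
  have hypos : 0 < qK α t (n - 1) (n - 1) := by
    rw [hy]; exact div_pos (Real.rpow_pos_of_pos (by linarith) α) hc
  -- theta values
  have hθ0 : thetaK α t n n = 1 / qK α t n n := by
    simp [thetaK, Nat.sub_self, thetaAux, aK]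
  have hθ1 : thetaK α t n (n - 1) =
      -(1 / qK α t (n - 1) (n - 1)) *
        (1 / qK α t n n * (qK α t n (n - 1) - qK α t (n - 1) (n - 1))) := by
    rw [thetaK, show n - (n - 1) = 1 by omega]
    show thetaAux (aK α t) n (0 + 1) 1 = _
    rw [thetaAux]
    simp [Finset.sum_range_one, thetaAux, aK, show n - 1 ≠ n by omega]
  have key : thetaK α t n n - thetaK α t n (n - 1)
      = qK α t n (n - 1) / (qK α t n n * qK α t (n - 1) (n - 1)) := by
    rw [hθ0, hθ1]
    field_simp
    ring_nf
  refine ⟨key, ?_⟩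
  rw [key, hx, hy, hz]
  have harg : (t n - t (n - 1)) + (t (n - 1) - t (n - 2)) = t n - t (n - 2) := by ring
  rw [harg]
  unfold omegaK
  rw [show (1:ℝ) + α = α + 1 by ring, Real.Gamma_add_one hα0.ne',
    show α + 1 - 1 = α by ring]
  have hB : (t n - t (n - 1)) ^ α ≠ 0 := (Real.rpow_pos_of_pos (by linarith) α).ne'
  have hC : (t (n - 1) - t (n - 2)) ^ α ≠ 0 := (Real.rpow_pos_of_pos (by linarith) α).ne'
  field_simp
end

section
/- The kernels q_{j}^{(n)} satisfy: q_j^{(n)} > 0 for 0 ≤ j ≤ n−1; q_{j−1}^{(n−1)} > q_j^{(n)} for 1 ≤ j ≤ n−1 and n ≥ 2; and the strict log-convexity-type inequality q_{j−1}^{(n−1)} q_{j+1}^{(n)} > q_j^{(n−1)} q_j^{(n)} for 1 ≤ j ≤ n−2 and n ≥ 3. -/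
open Finset intervalIntegral Matrix

/-! ### Auxiliary lemmas -/

lemma int_omega (α : ℝ) (hα0 : 0 < α) (c a b : ℝ) :
    IntervalIntegrable (fun s => omegaK α (c - s)) MeasureTheory.volume a b := by
  have h1 : IntervalIntegrable (fun x : ℝ => x ^ (α - 1)) MeasureTheory.volume (c - a) (c - b) :=
    intervalIntegrable_rpow' (by linarith)
  have h2 := (h1.comp_sub_left c)
  simp only [sub_sub_cancel] at h2
  exact h2.div_const (Real.Gamma α)

lemma pos_omega (α : ℝ) (hα0 : 0 < α) {a b c : ℝ} (hab : a < b) (hbc : b ≤ c) :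
    0 < ∫ s in a..b, omegaK α (c - s) := by
  apply intervalIntegral_pos_of_pos_on (int_omega α hα0 c a b) _ hab
  intro x hx
  have : 0 < c - x := by linarith [hx.2]
  exact div_pos (Real.rpow_pos_of_pos this _) (Real.Gamma_pos_of_pos hα0)

lemma strict_int {f g : ℝ → ℝ} {a b : ℝ} (hab : a < b)
    (hf : IntervalIntegrable f MeasureTheory.volume a b)
    (hg : IntervalIntegrable g MeasureTheory.volume a b)
    (hlt : ∀ x ∈ Set.Ioo a b, f x < g x) :
    (∫ s in a..b, f s) < ∫ s in a..b, g s := by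
  have h : 0 < ∫ s in a..b, (g s - f s) := by
    apply intervalIntegral_pos_of_pos_on (hg.sub hf) _ hab
    intro x hx; exact sub_pos.mpr (hlt x hx)
  rw [intervalIntegral.integral_sub hg hf] at h
  linarith

lemma ratio_mono (α : ℝ) (hα0 : 0 < α) (hα1 : α < 1) {T' T x y : ℝ}
    (hxy : x < y) (hy : y < T') (hT : T' < T) :
    (T - y) ^ (α - 1) * (T' - x) ^ (α - 1) < (T - x) ^ (α - 1) * (T' - y) ^ (α - 1) := by
  have hx' : (0:ℝ) < T' - x := by linarith
  have hy' : (0:ℝ) < T' - y := by linarith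
  have hTx : (0:ℝ) < T - x := by linarith
  have hTy : (0:ℝ) < T - y := by linarith
  have hratio : (T - x) / (T' - x) < (T - y) / (T' - y) := by
    rw [div_lt_div_iff₀ hx' hy']
    nlinarith
  have h := Real.rpow_lt_rpow_of_neg (by positivity : (0:ℝ) < (T - x)/(T' - x)) hratio
    (by linarith : α - 1 < 0)
  rw [Real.div_rpow hTx.le hx'.le, Real.div_rpow hTy.le hy'.le] at h
  have hpx := Real.rpow_pos_of_pos hx' (α - 1)
  have hpy := Real.rpow_pos_of_pos hy' (α - 1)
  rw [div_lt_div_iff₀ hpy hpx] at h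
  linarith

lemma arith1 {p q u v g : ℝ} (hg : 0 < g) (hv : 0 < v) (h : p * v < q * u) :
    p / g < (q / v) * (u / g) := by
  rw [div_mul_div_comm, div_lt_div_iff₀ hg (by positivity)]
  nlinarith

lemma arith2 {p q u v g : ℝ} (hg : 0 < g) (hv : 0 < v) (h : q * u < p * v) :
    (q / v) * (u / g) < p / g := by
  rw [div_mul_div_comm, div_lt_div_iff₀ (by positivity : (0:ℝ) < v * g) hg]
  nlinarith

theorem stmt9 (α : ℝ) (hα0 : 0 < α) (hα1 : α < 1)
    (N : ℕ) (t : ℕ → ℝ) (ht0 : t 0 = 0) (ht : ∀ k, k < N → t k < t (k + 1)) :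
    (∀ n j, 1 ≤ n → n ≤ N → j ≤ n - 1 → 0 < qK α t n (n - j)) ∧
    (∀ n j, 2 ≤ n → n ≤ N → 1 ≤ j → j ≤ n - 1 →
      qK α t n (n - j) < qK α t (n - 1) (n - j)) ∧
    (∀ n j, 3 ≤ n → n ≤ N → 1 ≤ j → j ≤ n - 2 →
      qK α t (n - 1) (n - 1 - j) * qK α t n (n - j)
        < qK α t (n - 1) (n - j) * qK α t n (n - j - 1)) := by
  have hstrict : ∀ j, j ≤ N → ∀ i, i < j → t i < t j := by
    intro j
    induction j with
    | zero => intro _ i hi; omega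
    | succ m ih =>
      intro hj i hi
      have hm : t m < t (m + 1) := ht m (by omega)
      rcases Nat.lt_succ_iff_lt_or_eq.mp hi with h | h
      · exact (ih (by omega) i h).trans hm
      · rw [h]; exact hm
  have hle : ∀ i j, i ≤ j → j ≤ N → t i ≤ t j := by
    intro i j hij hjN
    rcases lt_or_eq_of_le hij with h | h
    · exact (hstrict j hjN i h).le
    · rw [h]
  refine ⟨?_, ?_, ?_⟩
  · -- positivity
    intro n j hn1 hnN hj
    exact pos_omega α hα0 (hstrict (n - j) (by omega) (n - j - 1) (by omega))
      (hle (n - j) n (by omega) hnN)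
  · -- monotonicity
    intro n j h2 hN hj1 hj
    simp only [qK]
    apply strict_int (hstrict (n - j) (by omega) (n - j - 1) (by omega))
      (int_omega α hα0 _ _ _) (int_omega α hα0 _ _ _)
    intro x hx
    have hx0 : x < t (n - j) := hx.2
    have h1 : t (n - j) ≤ t (n - 1) := hle (n - j) (n - 1) (by omega) (by omega)
    have h2' : t (n - 1) < t n := hstrict n hN (n - 1) (by omega)
    have hpos : 0 < t (n - 1) - x := by linarith
    have hlt : t (n - 1) - x < t n - x := by linarith
    have := Real.rpow_lt_rpow_of_neg hpos hlt (by linarith : α - 1 < 0)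
    unfold omegaK
    have hΓ : 0 < Real.Gamma α := Real.Gamma_pos_of_pos hα0
    exact div_lt_div_of_pos_right this hΓ
  · -- log-convexity
    intro n j h3 hN hj1 hj
    have e : n - 1 - j = n - j - 1 := by omega
    rw [e]
    simp only [qK]
    set T' := t (n - 1) with hT'def
    set T := t n with hTdef
    set a2 := t (n - j - 1 - 1) with ha2def
    set a1 := t (n - j - 1) with ha1def
    set a0 := t (n - j) with ha0def
    have ha21 : a2 < a1 := hstrict (n - j - 1) (by omega) (n - j - 1 - 1) (by omega)
    have ha10 : a1 < a0 := hstrict (n - j) (by omega) (n - j - 1) (by omega)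
    have ha0T' : a0 ≤ T' := hle (n - j) (n - 1) (by omega) (by omega)
    have hT'T : T' < T := hstrict n hN (n - 1) (by omega)
    have ha1T' : a1 < T' := lt_of_lt_of_le ha10 ha0T'
    have hΓ : 0 < Real.Gamma α := Real.Gamma_pos_of_pos hα0
    have hv : (0:ℝ) < (T' - a1) ^ (α - 1) :=
      Real.rpow_pos_of_pos (by linarith) _
    set r₀ : ℝ := (T - a1) ^ (α - 1) / (T' - a1) ^ (α - 1) with hr₀def
    have hr₀ : 0 < r₀ :=
      div_pos (Real.rpow_pos_of_pos (by linarith) _) hv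
    have hA' : 0 < ∫ s in a2..a1, omegaK α (T' - s) :=
      pos_omega α hα0 ha21 (by linarith)
    have hB' : 0 < ∫ s in a1..a0, omegaK α (T' - s) :=
      pos_omega α hα0 ha10 ha0T'
    have claim1 : (∫ s in a1..a0, omegaK α (T - s)) < r₀ * ∫ s in a1..a0, omegaK α (T' - s) := by
      have h := strict_int ha10 (int_omega α hα0 T a1 a0)
        ((int_omega α hα0 T' a1 a0).const_mul r₀) ?_
      · rwa [intervalIntegral.integral_const_mul] at h
      · intro x hx
        have hx1 : a1 < x := hx.1
        have hxT' : x < T' := lt_of_lt_of_le hx.2 ha0T'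
        have key := ratio_mono α hα0 hα1 hx1 hxT' hT'T
        exact arith1 hΓ hv key
    have claim2 : r₀ * (∫ s in a2..a1, omegaK α (T' - s)) < ∫ s in a2..a1, omegaK α (T - s) := by
      have h := strict_int ha21 ((int_omega α hα0 T' a2 a1).const_mul r₀)
        (int_omega α hα0 T a2 a1) ?_
      · rwa [intervalIntegral.integral_const_mul] at h
      · intro x hx
        have key := ratio_mono α hα0 hα1 hx.2 ha1T' hT'T
        exact arith2 hΓ hv key
    calc (∫ s in a2..a1, omegaK α (T' - s)) * ∫ s in a1..a0, omegaK α (T - s)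
        < (∫ s in a2..a1, omegaK α (T' - s)) * (r₀ * ∫ s in a1..a0, omegaK α (T' - s)) :=
          mul_lt_mul_of_pos_left claim1 hA'
      _ = (r₀ * ∫ s in a2..a1, omegaK α (T' - s)) * ∫ s in a1..a0, omegaK α (T' - s) := by ring
      _ < (∫ s in a2..a1, omegaK α (T - s)) * ∫ s in a1..a0, omegaK α (T' - s) :=
          mul_lt_mul_of_pos_right claim2 hB'
      _ = (∫ s in a1..a0, omegaK α (T' - s)) * ∫ s in a2..a1, omegaK α (T - s) := by ring
end
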